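/- Let Ω = B_1(0) ⊆ ℝⁿ, n ≥ 1, s > 0, and define D₁(x) = |x|^s I. Then for every β ∈ (max(1/2, n/(s-2+2n)), 1) there exists a constant C ≥ 0 such that for all continuous vector fields Φ : closure(Ω) → ℝⁿ, ∫_Ω |∇·D₁ · Φ| ≤ C ( ∫_Ω (Φ · D₁ Φ)^β + 1 ), where ∇·D₁(x) = s|x|^{s-2}x almost everywhere. -/

import Mathlib

open MeasureTheory Real

open Metric Set
open scoped ENNReal

lemma aux_int (n : ℕ) (hn : 1 ≤ n) (r : ℝ) (hr : -(n : ℝ) < r) :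
    IntegrableOn (fun x : EuclideanSpace ℝ (Fin n) => ‖x‖ ^ r)
      (Metric.ball (0 : EuclideanSpace ℝ (Fin n)) 1) := by
  haveI : Nontrivial (EuclideanSpace ℝ (Fin n)) := by
    apply Module.nontrivial_of_finrank_pos (R := ℝ)
    rw [finrank_euclideanSpace_fin]; exact hn
  set E := EuclideanSpace ℝ (Fin n) with hE
  have hdim : Module.finrank ℝ E = n := finrank_euclideanSpace_fin
  set G : ℝ → ℝ≥0∞ := fun y => ENNReal.ofReal (if y < 1 then y ^ r else 0) with hG
  have hGmeas : Measurable G := by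
    apply Measurable.ennreal_ofReal
    exact Measurable.ite measurableSet_Iio (measurable_id.pow_const r) measurable_const
  -- finiteness of the 1-dimensional integral
  have hfin : ∫⁻ t in Ioi (0:ℝ), ENNReal.ofReal (t ^ (n-1 : ℕ)) * G t ∂volume < ∞ := by
    have he : (-1 : ℝ) < (n : ℝ) - 1 + r := by
      have : (1:ℝ) ≤ n := by exact_mod_cast hn
      linarith
    have hint := (intervalIntegral.intervalIntegrable_rpow' he (a := 0) (b := 1)).1
    have hfin' : ∫⁻ t in Ioc (0:ℝ) 1, ↑‖t ^ ((n:ℝ) - 1 + r)‖₊ ∂volume < ∞ := hint.2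
    calc ∫⁻ t in Ioi (0:ℝ), ENNReal.ofReal (t ^ (n-1 : ℕ)) * G t ∂volume
        ≤ ∫⁻ t in Ioi (0:ℝ),
            (Ioc (0:ℝ) 1).indicator (fun t => ↑‖t ^ ((n:ℝ) - 1 + r)‖₊) t ∂volume := by
          refine lintegral_mono_ae ?_
          filter_upwards [ae_restrict_mem measurableSet_Ioi] with t ht
          rw [mem_Ioi] at ht
          by_cases h1 : t < 1
          · rw [hG]
            simp only [if_pos h1]
            rw [Set.indicator_of_mem (by exact ⟨ht, h1.le⟩ : t ∈ Ioc (0:ℝ) 1)]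
            rw [← ENNReal.ofReal_mul (by positivity)]
            have : t ^ (n-1 : ℕ) * t ^ r = t ^ ((n:ℝ) - 1 + r) := by
              rw [← Real.rpow_natCast t (n-1), ← Real.rpow_add ht]
              congr 1
              push_cast [Nat.cast_sub hn]
              ring
            rw [this]
            exact Real.ofReal_le_enorm _
          · rw [hG]
            simp only [if_neg h1, ENNReal.ofReal_zero, mul_zero]
            exact zero_le
      _ = ∫⁻ t in Ioc (0:ℝ) 1, ↑‖t ^ ((n:ℝ) - 1 + r)‖₊ ∂volume := by
          rw [setLIntegral_indicator measurableSet_Ioc]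
          congr 1
          rw [Set.inter_eq_left.2 (Set.Ioc_subset_Ioi_self)]
      _ < ∞ := hfin'
  constructor
  · exact (measurable_norm.pow_const r).aestronglyMeasurable
  · unfold HasFiniteIntegral
    have key : ∫⁻ x in ball (0 : E) 1, ‖(‖x‖ ^ r)‖ₑ ∂volume
        = ∫⁻ x : E, G ‖x‖ ∂volume := by
      rw [← lintegral_indicator measurableSet_ball]
      refine lintegral_congr fun x => ?_
      by_cases hx : x ∈ ball (0 : E) 1
      · rw [mem_ball_zero_iff] at hx
        simp only [hG, Set.indicator_of_mem (mem_ball_zero_iff.2 hx), if_pos hx]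
        rw [Real.enorm_eq_ofReal (Real.rpow_nonneg (norm_nonneg _) _)]
      · have hx' : ¬ ‖x‖ < 1 := by simpa [mem_ball_zero_iff] using hx
        simp only [hG, Set.indicator_of_notMem hx, if_neg hx', ENNReal.ofReal_zero]
    beta_reduce
    rw [key]
    have step1 : ∫⁻ x : E, G ‖x‖ ∂volume
        = ∫⁻ x : ({0}ᶜ : Set E), G ‖(x : E)‖ ∂((volume : Measure E).comap (↑)) := by
      have e1 := lintegral_subtype_comap (μ := (volume : Measure E))
        (measurableSet_singleton (0:E)).compl (fun x : E => G ‖x‖)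
      rw [restrict_compl_singleton] at e1
      exact e1.symm
    have step2 : ∫⁻ x : ({0}ᶜ : Set E), G ‖(x : E)‖ ∂((volume : Measure E).comap (↑))
        = ∫⁻ p : sphere (0:E) 1 × Ioi (0:ℝ), G p.2.1
            ∂((volume : Measure E).toSphere.prod
              (Measure.volumeIoiPow (Module.finrank ℝ E - 1))) := by
      have h := (volume : Measure E).measurePreserving_homeomorphUnitSphereProd.lintegral_comp_emb
        (Homeomorph.measurableEmbedding _) (fun p => G p.2.1)
      simpa only [homeomorphUnitSphereProd_apply_snd_coe] using h
    have step3 : ∫⁻ p : sphere (0:E) 1 × Ioi (0:ℝ), G p.2.1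
            ∂((volume : Measure E).toSphere.prod
              (Measure.volumeIoiPow (Module.finrank ℝ E - 1)))
        = (volume : Measure E).toSphere univ
            * ∫⁻ y : Ioi (0:ℝ), G y.1 ∂(Measure.volumeIoiPow (Module.finrank ℝ E - 1)) := by
      rw [← lintegral_map (show Measurable fun y : Ioi (0:ℝ) => G y.1 from
          hGmeas.comp measurable_subtype_coe) measurable_snd,
        Measure.map_snd_prod, lintegral_smul_measure, smul_eq_mul]
    have step4 : ∫⁻ y : Ioi (0:ℝ), G y.1 ∂(Measure.volumeIoiPow (Module.finrank ℝ E - 1))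
        = ∫⁻ t in Ioi (0:ℝ), ENNReal.ofReal (t ^ (n-1 : ℕ)) * G t ∂volume := by
      rw [Measure.volumeIoiPow,
        lintegral_withDensity_eq_lintegral_mul _
          ((measurable_subtype_coe.pow_const _).ennreal_ofReal)
          (show Measurable fun y : Ioi (0:ℝ) => G y.1 from
            hGmeas.comp measurable_subtype_coe)]
      simp only [Pi.mul_apply, hdim]
      exact lintegral_subtype_comap measurableSet_Ioi
        (fun t : ℝ => ENNReal.ofReal (t ^ (n-1 : ℕ)) * G t)
    rw [step1, step2, step3, step4]
    exact ENNReal.mul_lt_top (measure_lt_top _ _) hfin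

/-- divergence estimate for `D₁(x) = |x|^s I` on the unit ball. -/
theorem stmt0 (n : ℕ) (hn : 1 ≤ n) (s : ℝ) (hs : 0 < s)
    (β : ℝ) (hβ1 : max (1/2) ((n : ℝ) / (s - 2 + 2 * n)) < β) (hβ2 : β < 1) :
    ∃ C : ℝ, 0 ≤ C ∧
      ∀ Φ : EuclideanSpace ℝ (Fin n) → EuclideanSpace ℝ (Fin n),
        ContinuousOn Φ (closure (Metric.ball (0 : EuclideanSpace ℝ (Fin n)) 1)) →
        ∫ x in Metric.ball (0 : EuclideanSpace ℝ (Fin n)) 1,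
            |s * ‖x‖ ^ (s - 2) * (inner ℝ x (Φ x) : ℝ)|
          ≤ C * ((∫ x in Metric.ball (0 : EuclideanSpace ℝ (Fin n)) 1,
              (‖x‖ ^ s * ‖Φ x‖ ^ 2) ^ β) + 1) := by
  set E := EuclideanSpace ℝ (Fin n) with hE
  haveI : Nontrivial E := by
    apply Module.nontrivial_of_finrank_pos (R := ℝ)
    rw [show Module.finrank ℝ E = n from finrank_euclideanSpace_fin]; exact hn
  have hβhalf : (1/2 : ℝ) < β := lt_of_le_of_lt (le_max_left _ _) hβ1
  have hβn : (n : ℝ) / (s - 2 + 2*n) < β := lt_of_le_of_lt (le_max_right _ _) hβ1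
  have hn1 : (1:ℝ) ≤ n := by exact_mod_cast hn
  have hden : 0 < s - 2 + 2*n := by linarith
  have h2β : 1 < 2*β := by linarith
  have h2β1 : (0:ℝ) < 2*β - 1 := by linarith
  set q : ℝ := 2*β/(2*β - 1) with hq
  have hq1 : 1 < q := by rw [hq, lt_div_iff₀ h2β1]; linarith
  set r : ℝ := (s/2 - 1) * q with hrdef
  have hr : -(n:ℝ) < r := by
    rw [div_lt_iff₀ hden] at hβn
    rw [hrdef, hq, show (s/2 - 1) * (2*β/(2*β-1)) = ((s-2)*β)/(2*β-1) by
      field_simp, lt_div_iff₀ h2β1]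
    nlinarith
  have hconj : Real.HolderConjugate (2*β) q := by
    rw [Real.holderConjugate_iff]
    constructor
    · exact h2β
    · rw [hq]; field_simp; ring
  have hInt2 : IntegrableOn (fun x : E => ‖x‖ ^ r) (ball (0:E) 1) := aux_int n hn r hr
  set K := ∫ x in ball (0:E) 1, ‖x‖ ^ r with hK
  have hK0 : 0 ≤ K :=
    integral_nonneg fun x => Real.rpow_nonneg (norm_nonneg _) _
  refine ⟨s * (K + 1), by positivity, ?_⟩
  intro Φ hΦ
  have hcomp : IsCompact (closure (ball (0:E) 1)) :=
    (isCompact_closedBall (0:E) 1).of_isClosed_subset isClosed_closure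
      closure_ball_subset_closedBall
  obtain ⟨M, hM⟩ := hcomp.exists_bound_of_continuousOn hΦ
  have hM0 : 0 ≤ M :=
    le_trans (norm_nonneg _) (hM 0 (subset_closure (mem_ball_self one_pos)))
  have hΦm : AEStronglyMeasurable Φ (volume.restrict (ball (0:E) 1)) :=
    (hΦ.mono subset_closure).aestronglyMeasurable measurableSet_ball
  -- integrability of the first term
  have hg1m : AEStronglyMeasurable (fun x : E => (‖x‖^s * ‖Φ x‖^2)^β)
      (volume.restrict (ball (0:E) 1)) := by
    have h1 : AEMeasurable (fun x : E => ‖x‖^s * ‖Φ x‖^2)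
        (volume.restrict (ball (0:E) 1)) :=
      (measurable_norm.pow_const s).aemeasurable.mul
        (((continuous_pow 2).comp_aestronglyMeasurable hΦm.norm).aemeasurable)
    exact (h1.pow aemeasurable_const).aestronglyMeasurable
  have hg1 : IntegrableOn (fun x : E => (‖x‖^s * ‖Φ x‖^2)^β) (ball (0:E) 1) := by
    refine ⟨hg1m, HasFiniteIntegral.restrict_of_bounded (C := (M^2)^β)
      measure_ball_lt_top ?_⟩
    filter_upwards [ae_restrict_mem measurableSet_ball] with x hx
    rw [mem_ball_zero_iff] at hx
    have h1 : ‖x‖^s ≤ 1 := Real.rpow_le_one (norm_nonneg _) hx.le hs.le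
    have h2 : ‖Φ x‖^2 ≤ M^2 := by
      have := hM x (subset_closure (mem_ball_zero_iff.2 hx))
      nlinarith [norm_nonneg (Φ x)]
    have h3 : (0:ℝ) ≤ ‖x‖^s * ‖Φ x‖^2 := by positivity
    rw [Real.norm_of_nonneg (Real.rpow_nonneg h3 β)]
    apply Real.rpow_le_rpow h3 _ (by linarith : (0:ℝ) ≤ β)
    calc ‖x‖^s * ‖Φ x‖^2 ≤ 1 * M^2 :=
          mul_le_mul h1 h2 (by positivity) one_pos.le
      _ = M^2 := one_mul _
  -- pointwise a.e. bound
  have hae : ∀ᵐ x ∂(volume.restrict (ball (0:E) 1)),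
      |s * ‖x‖ ^ (s - 2) * (inner ℝ x (Φ x) : ℝ)|
        ≤ s * ((‖x‖^s * ‖Φ x‖^2)^β + ‖x‖^r) := by
    have hne : ∀ᵐ x : E ∂volume, x ∉ ({0} : Set E) :=
      (Set.countable_singleton (0:E)).ae_notMem volume
    filter_upwards [ae_restrict_of_ae hne] with x hx0
    have hx0' : x ≠ 0 := by simpa using hx0
    set a := ‖x‖ with ha
    have hA : 0 < a := norm_pos_iff.2 hx0'
    set c := ‖Φ x‖ with hc
    have hc0 : 0 ≤ c := norm_nonneg _
    have e : ∀ u v : ℝ, a^u * a^v = a^(u+v) := fun u v => (Real.rpow_add hA u v).symm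
    have step1 : |s * a ^ (s-2) * (inner ℝ x (Φ x) : ℝ)| ≤ s * (a^(s-2) * (a * c)) := by
      rw [abs_mul, abs_mul, abs_of_pos hs, abs_of_nonneg (Real.rpow_nonneg hA.le _)]
      rw [mul_assoc]
      refine mul_le_mul_of_nonneg_left ?_ hs.le
      exact mul_le_mul_of_nonneg_left (abs_real_inner_le_norm x (Φ x))
        (Real.rpow_nonneg hA.le _)
    have step2 : a^(s-2) * (a * c) = (a^(s/2) * c) * a^(s/2-1) := by
      rw [show a * c = a^(1:ℝ) * c by rw [Real.rpow_one]]
      calc a^(s-2) * (a^(1:ℝ) * c) = (a^(s-2) * a^(1:ℝ)) * c := by ring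
        _ = a^(s-1) * c := by rw [e, show s-2+1 = s-1 by ring]
        _ = (a^(s/2) * a^(s/2-1)) * c := by
            rw [e, show s/2+(s/2-1) = s-1 by ring]
        _ = (a^(s/2) * c) * a^(s/2-1) := by ring
    have hyoung : (a^(s/2) * c) * a^(s/2-1)
        ≤ (a^(s/2) * c)^(2*β) + (a^(s/2-1))^q := by
      refine le_trans (Real.young_inequality_of_nonneg (by positivity)
        (Real.rpow_nonneg hA.le _) hconj) ?_
      gcongr
      · exact div_le_self (by positivity) (by linarith)
      · exact div_le_self (Real.rpow_nonneg (Real.rpow_nonneg hA.le _) _) hq1.le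
    have id1 : (a^(s/2) * c)^(2*β) = (a^s * c^2)^β := by
      rw [Real.mul_rpow (Real.rpow_nonneg hA.le _) hc0,
        Real.mul_rpow (Real.rpow_nonneg hA.le _) (by positivity : (0:ℝ) ≤ c^2),
        ← Real.rpow_natCast c 2,
        ← Real.rpow_mul hA.le, ← Real.rpow_mul hA.le, ← Real.rpow_mul hc0,
        show s/2*(2*β) = s*β by ring, show ((2:ℕ):ℝ)*β = 2*β by norm_num]
    have id2 : (a^(s/2-1))^q = a^r := by
      rw [← Real.rpow_mul hA.le, hrdef]
    calc |s * a ^ (s-2) * (inner ℝ x (Φ x) : ℝ)|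
        ≤ s * (a^(s-2) * (a * c)) := step1
      _ = s * ((a^(s/2) * c) * a^(s/2-1)) := by rw [step2]
      _ ≤ s * ((a^(s/2) * c)^(2*β) + (a^(s/2-1))^q) :=
          mul_le_mul_of_nonneg_left hyoung hs.le
      _ = s * ((a^s * c^2)^β + a^r) := by rw [id1, id2]
  -- conclusion
  have hA0 : 0 ≤ ∫ x in ball (0:E) 1, (‖x‖^s * ‖Φ x‖^2)^β :=
    integral_nonneg fun x => Real.rpow_nonneg (by positivity) _
  have hgint : Integrable (fun x : E => s * ((‖x‖^s * ‖Φ x‖^2)^β + ‖x‖^r))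
      (volume.restrict (ball (0:E) 1)) := (hg1.add hInt2).const_mul s
  calc ∫ x in ball (0:E) 1, |s * ‖x‖ ^ (s - 2) * (inner ℝ x (Φ x) : ℝ)|
      ≤ ∫ x in ball (0:E) 1, s * ((‖x‖^s * ‖Φ x‖^2)^β + ‖x‖^r) :=
        integral_mono_of_nonneg (Filter.Eventually.of_forall fun x => abs_nonneg _)
          hgint hae
    _ = s * ((∫ x in ball (0:E) 1, (‖x‖^s * ‖Φ x‖^2)^β) + K) := by
        rw [integral_const_mul, integral_add hg1 hInt2]
    _ ≤ s * (K + 1) * ((∫ x in ball (0:E) 1, (‖x‖^s * ‖Φ x‖^2)^β) + 1) := by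
        nlinarith [mul_nonneg hK0 hA0]
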